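/- In the toric reflection group W(k,n,m) with n, m coprime, all the generators x₁, ..., xₙ are pairwise conjugate. -/
import Mathlib


/-- The word `x_i x_{i+1} ⋯ x_{i+l-1}` (with `l` factors, indices mod `n`) in the free
group on `ZMod n`. -/
def wWord (n l : ℕ) (i : ZMod n) : FreeGroup (ZMod n) :=
  ((List.range l).map fun j => FreeGroup.of (i + (j : ZMod n))).prod

/-- The relations of the toric reflection group `W(k,n,m)`: `xᵢ^k = 1` for all `i`, and all
the `m`-factor products `x_i x_{i+1} ⋯ x_{i+m-1}` (indices mod `n`) are equal. -/
def wRels (k n m : ℕ) : Set (FreeGroup (ZMod n)) :=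
  (Set.range fun i : ZMod n => FreeGroup.of i ^ k) ∪
  (Set.range fun i : ZMod n => wWord n m 1 * (wWord n m i)⁻¹)

/-- The toric reflection group `W(k,n,m)`. -/
abbrev TorGroup (k n m : ℕ) := PresentedGroup (wRels k n m)

/-- The generator `xᵢ` of `W(k,n,m)`, for `i : ZMod n`. -/
def tx (k n m : ℕ) (i : ZMod n) : TorGroup k n m := PresentedGroup.of i

/-- The product `x_i x_{i+1} ⋯ x_{i+l-1}` (with `l` factors, indices mod `n`) in
`W(k,n,m)`. -/
def txProd (k n m : ℕ) (l : ℕ) (i : ZMod n) : TorGroup k n m :=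
  ((List.range l).map fun j => tx k n m (i + (j : ZMod n))).prod

def torMk (k n m : ℕ) : FreeGroup (ZMod n) →* TorGroup k n m :=
  QuotientGroup.mk' (Subgroup.normalClosure (wRels k n m))

lemma torMk_wWord (k n m l : ℕ) (i : ZMod n) :
    torMk k n m (wWord n l i) = txProd k n m l i := by
  unfold wWord txProd
  rw [map_list_prod, List.map_map]
  rfl

lemma txProd_rel (k n m : ℕ) (i : ZMod n) :
    txProd k n m m i = txProd k n m m 1 := by
  have h : torMk k n m (wWord n m 1 * (wWord n m i)⁻¹) = 1 := by
    apply (QuotientGroup.eq_one_iff _).2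
    exact Subgroup.subset_normalClosure (Or.inr ⟨i, rfl⟩)
  rw [map_mul, map_inv] at h
  rw [← torMk_wWord, ← torMk_wWord]
  have := mul_inv_eq_one.mp h
  exact this.symm

lemma txProd_succ_right (k n m l : ℕ) (i : ZMod n) :
    txProd k n m (l + 1) i = txProd k n m l i * tx k n m (i + l) := by
  unfold txProd
  rw [List.range_succ]
  simp

lemma txProd_succ_left (k n m l : ℕ) (i : ZMod n) :
    txProd k n m (l + 1) i = tx k n m i * txProd k n m l (i + 1) := by
  induction l with
  | zero =>
    rw [txProd_succ_right]
    simp [txProd]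
  | succ l ih =>
    have h : (i + ((l : ℕ) + 1 : ℕ) : ZMod n) = i + 1 + (l : ℕ) := by push_cast; ring
    rw [txProd_succ_right, ih, mul_assoc, h, ← txProd_succ_right]

lemma tx_conj_add_m (k n m : ℕ) (hm : 2 ≤ m) (i : ZMod n) :
    IsConj (tx k n m i) (tx k n m (i + m)) := by
  obtain ⟨l, rfl⟩ : ∃ l, m = l + 1 := ⟨m - 1, by omega⟩
  have h1 := txProd_rel k n (l+1) i
  have h2 := txProd_rel k n (l+1) (i+1)
  have key : txProd k n (l+1) (l+1) i = txProd k n (l+1) (l+1) (i+1) := h1.trans h2.symm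
  rw [txProd_succ_left, txProd_succ_right] at key
  -- key : tx i * P = P * tx (i+1+l)
  rw [isConj_iff]
  refine ⟨(txProd k n (l+1) l (i+1))⁻¹, ?_⟩
  have : i + 1 + (l : ZMod n) = i + ((l : ℕ) + 1 : ℕ) := by push_cast; ring
  rw [inv_inv, mul_assoc, key, inv_mul_cancel_left, this]


/-- In the toric reflection group `W(k,n,m)` with `n, m` coprime, all the generators
`x₁, …, xₙ` are pairwise conjugate. -/
theorem stmt9 (k n m : ℕ) (hk : 2 ≤ k) (hn : 2 ≤ n) (hm : 2 ≤ m)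
    (hco : Nat.Coprime n m) :
    ∀ i j : ZMod n, IsConj (tx k n m i) (tx k n m j) := by
  haveI : NeZero n := ⟨by omega⟩
  have step : ∀ i : ZMod n, ∀ t : ℕ, IsConj (tx k n m i) (tx k n m (i + t * m)) := by
    intro i t
    induction t with
    | zero => simpa using IsConj.refl (tx k n m i)
    | succ t ih =>
      have h2 := tx_conj_add_m k n m hm (i + t * m)
      have he : (i + (t : ZMod n) * m + m) = i + ((t : ℕ) + 1 : ℕ) * m := by
        push_cast; ring
      exact ih.trans (he ▸ h2)
  intro i j
  have hu : IsUnit (m : ZMod n) := (ZMod.isUnit_iff_coprime m n).2 hco.symm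
  obtain ⟨c, hc⟩ := hu.exists_left_inv
  set t : ZMod n := (j - i) * c with ht
  have hkey : i + ((t.val : ℕ) : ZMod n) * m = j := by
    rw [ZMod.natCast_val, ZMod.cast_id, ht, mul_assoc, hc]
    ring
  have := step i t.val
  rwa [hkey] at this
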